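/- Let n ≥ 1, k ≥ 2 and j ≥ 1 be integers with n + j ≤ kn. Then n times the number of pairs (f, i), where f is a path in 𝒫_{n,k,j}, 1 ≤ i ≤ j, and every interior k-divisible point of f lies strictly above the baseline for (f, i) (i.e. kn·(S(f, m) − 2(i−1)) > m·(2−(k−2)n) for every m with 0 < m < kn and k ∣ m), equals j·C(kn, n+j). Equivalently, (j/n)·C(kn, n+j) is the number of lattice paths of n+j upsteps and kn−(n+j) downsteps which start at (0, −2i) for some i ≥ 0 and have all interior k-divisible points strictly above the line through the origin of slope −((k−2)n−2)/(kn). -/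

import Mathlib

open Finset
open Fin.NatCast

/-- The height of the path `f` at point `m`: the partial sum `S(f, m) = Σ_{t < m} f(t)`. -/
def pathSum {N : ℕ} (f : Fin N → ℤ) (m : ℕ) : ℤ :=
  ∑ t ∈ Finset.univ.filter (fun t : Fin N => (t : ℕ) < m), f t

/-- A path in 𝒫_{n,k,j}: a function `f : Fin (k*n) → ℤ` with all values in {1, −1}
and exactly `n+j` values equal to 1. -/
def IsPathPJ (n k j : ℕ) (f : Fin (k * n) → ℤ) : Prop :=
  (∀ t, f t = 1 ∨ f t = -1) ∧
    (Finset.univ.filter (fun t : Fin (k * n) => f t = 1)).card = n + j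

open scoped Classical in
lemma cycle_lemma (n j : ℕ) (hn : 1 ≤ n) (hj : 1 ≤ j) (d : ℕ → ℤ)
    (hper : ∀ m, d (m + n) = d m) (hlb : ∀ m, (-1:ℤ) ≤ d m)
    (hsum : ∑ t ∈ Finset.range n, d t = j) :
    ∑ s ∈ Finset.range n, ((Finset.range j).filter
      (fun i : ℕ => ∀ q, 0 < q → q < n → (i:ℤ) + 1 ≤ ∑ t ∈ Finset.range q, d (s + t))).card
      = j := by
  set D : ℕ → ℤ := fun m => ∑ t ∈ Finset.range m, d t with hDdef
  have hstep : ∀ m, D (m+1) = D m + d m := fun m => Finset.sum_range_succ d m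
  have hDper : ∀ m, D (m + n) = D m + j := by
    intro m
    induction m with
    | zero => simpa [D] using hsum
    | succ m ih =>
      have h1 : m + 1 + n = (m + n) + 1 := by omega
      rw [h1, hstep, ih, hper, hstep]; ring
  have hDshift : ∀ s q, ∑ t ∈ Finset.range q, d (s + t) = D (s + q) - D s := by
    intro s q
    induction q with
    | zero => simp
    | succ q ih =>
      rw [Finset.sum_range_succ, ih, show s + (q+1) = (s+q)+1 by omega, hstep]; ring
  have hDmul : ∀ a r : ℕ, D (a * n + r) = a * j + D r := by
    intro a r
    induction a with
    | zero => simp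
    | succ a ih =>
      have h1 : (a+1) * n + r = (a * n + r) + n := by ring
      rw [h1, hDper, ih]; push_cast; ring
  have hDlow : ∀ r : ℕ, -(r:ℤ) ≤ D r := by
    intro r
    have : ∑ _t ∈ Finset.range r, (-1:ℤ) ≤ ∑ t ∈ Finset.range r, d t :=
      Finset.sum_le_sum fun t _ => hlb t
    simpa [D] using this
  have hDdecomp : ∀ m, D m = (m / n : ℕ) * j + D (m % n) := by
    intro m
    have h1 : (m / n) * n + m % n = m := by
      rw [show m / n * n + m % n = n * (m / n) + m % n by ring, Nat.div_add_mod]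
    conv_lhs => rw [← h1]
    exact hDmul _ _
  have hne : ((Finset.range n).image D).Nonempty :=
    Finset.image_nonempty.2 ⟨0, Finset.mem_range.2 (by omega)⟩
  set E : ℤ := ((Finset.range n).image D).min' hne with hE
  have hEle : ∀ m, E ≤ D m := by
    intro m
    have h1 : E ≤ D (m % n) := by
      apply Finset.min'_le
      exact Finset.mem_image_of_mem D (Finset.mem_range.2 (Nat.mod_lt m (by omega)))
    have h2 : (0:ℤ) ≤ (m / n : ℕ) * j := by positivity
    rw [hDdecomp m]; omega
  obtain ⟨r₀, hr₀n, hr₀⟩ : ∃ r₀ < n, D r₀ = E := by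
    have := Finset.min'_mem _ hne
    rw [Finset.mem_image] at this
    obtain ⟨r₀, hr₀, hval⟩ := this
    exact ⟨r₀, Finset.mem_range.1 hr₀, hval⟩
  have hgrowth : ∀ c : ℤ, ∀ m : ℕ, n * (c.toNat + n + 1) ≤ m → c < D m := by
    intro c m hm
    have hdiv : c.toNat + n + 1 ≤ m / n := (Nat.le_div_iff_mul_le (by omega)).2 (by rw [Nat.mul_comm]; exact hm)
    have h1 : ((c.toNat : ℤ) + n + 1) ≤ ((m / n : ℕ) : ℤ) := by exact_mod_cast hdiv
    have h2 : ((m / n : ℕ) : ℤ) * 1 ≤ ((m / n : ℕ) : ℤ) * j := by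
      apply mul_le_mul_of_nonneg_left (by exact_mod_cast hj) (by positivity)
    have h3 := hDlow (m % n)
    have h4 : ((m % n : ℕ) : ℤ) < n := by exact_mod_cast Nat.mod_lt m (by omega)
    have h5 : c ≤ (c.toNat : ℤ) := Int.self_le_toNat c
    rw [hDdecomp m]
    linarith
  set GP : Finset (ℕ × ℕ) := ((Finset.range n) ×ˢ (Finset.range j)).filter
      (fun p => ∀ q, 0 < q → q < n → (p.2:ℤ) + 1 ≤ D (p.1 + q) - D p.1) with hGP
  have hLHS : ∑ s ∈ Finset.range n, ((Finset.range j).filter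
      (fun i : ℕ => ∀ q, 0 < q → q < n → (i:ℤ) + 1 ≤ ∑ t ∈ Finset.range q, d (s + t))).card
      = GP.card := by
    rw [hGP, Finset.card_filter, Finset.sum_product]
    refine Finset.sum_congr rfl fun s _ => ?_
    rw [Finset.card_filter]
    refine Finset.sum_congr rfl fun i _ => ?_
    congr 1
    simp only [eq_iff_iff]
    constructor <;> intro h q h1 h2 <;> have := h q h1 h2
    · rwa [hDshift] at this
    · rwa [hDshift]
  rw [hLHS]
  have hmemGP : ∀ p : ℕ × ℕ, p ∈ GP ↔ p.1 < n ∧ p.2 < j ∧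
      ∀ q, 0 < q → q < n → (p.2:ℤ) + 1 ≤ D (p.1 + q) - D p.1 := by
    intro p
    rw [hGP, Finset.mem_filter, Finset.mem_product, Finset.mem_range, Finset.mem_range]
    tauto
  have hkey : ∀ p : ℕ × ℕ, p ∈ GP → ∀ m, p.1 < m → D p.1 + p.2 + 1 ≤ D m := by
    intro p hg
    rw [hmemGP] at hg
    obtain ⟨hsn, hij, hgood⟩ := hg
    intro m
    induction m using Nat.strong_induction_on with
    | _ m ih =>
      intro hsm
      rcases lt_trichotomy m (p.1 + n) with hm | hm | hm
      · have hq := hgood (m - p.1) (by omega) (by omega)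
        have heq : p.1 + (m - p.1) = m := by omega
        rw [heq] at hq; omega
      · rw [hm, hDper]
        have : (p.2:ℤ) + 1 ≤ j := by exact_mod_cast hij
        omega
      · have h1 : p.1 < m - n := by omega
        have h2 := ih (m - n) (by omega) h1
        have h3 : D m = D (m - n) + j := by
          have := hDper (m - n); rw [show m - n + n = m by omega] at this; exact this
        have : (0:ℤ) ≤ j := by positivity
        omega
  have hcard : GP.card = (Finset.Ico E (E + j)).card := by
    apply Finset.card_bij (fun p _ => D p.1 + p.2)
    · intro p hp
      have hp' := (hmemGP p).1 hp
      obtain ⟨hsn, hij, _⟩ := hp'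
      rw [Finset.mem_Ico]
      have h2 : (0:ℤ) ≤ p.2 := by positivity
      refine ⟨by have := hEle p.1; omega, ?_⟩
      by_contra hcon
      push_neg at hcon
      have hkey' := hkey p hp
      rcases le_or_gt r₀ p.1 with hle | hlt
      · have := hkey' (r₀ + n) (by omega)
        rw [hDper, hr₀] at this
        have hE1 : E ≤ D p.1 := hEle p.1
        omega
      · have := hkey' r₀ (by omega)
        rw [hr₀] at this
        have hE1 : E ≤ D p.1 := hEle p.1
        omega
    · intro p hp p' hp' heq
      have hk1 := hkey p hp
      have hk2 := hkey p' hp'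
      have h2 : (0:ℤ) ≤ p.2 := by positivity
      have h2' : (0:ℤ) ≤ p'.2 := by positivity
      have hfst : p.1 = p'.1 := by
        rcases lt_trichotomy p.1 p'.1 with h | h | h
        · have := hk1 p'.1 h; omega
        · exact h
        · have := hk2 p.1 h; omega
      have hsnd : p.2 = p'.2 := by
        rw [hfst] at heq
        have : (p.2 : ℤ) = p'.2 := by omega
        exact_mod_cast this
      exact Prod.ext hfst hsnd
    · intro c hc
      rw [Finset.mem_Ico] at hc
      set B : ℕ := n * (c.toNat + n + 1) with hB
      set s : ℕ := Nat.findGreatest (fun m => D m ≤ c) B with hs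
      have hr₀B : r₀ ≤ B := by
        have : n * 1 ≤ n * (c.toNat + n + 1) := Nat.mul_le_mul_left n (by omega)
        omega
      have hsspec : D s ≤ c := by
        apply Nat.findGreatest_spec (P := fun m => D m ≤ c) (m := r₀) hr₀B
        rw [hr₀]; exact hc.1
      have hmax : ∀ m, s < m → c < D m := by
        intro m hm
        rcases le_or_gt m B with hmB | hmB
        · have := Nat.findGreatest_is_greatest (P := fun m => D m ≤ c) hm hmB
          omega
        · exact hgrowth c m (by omega)
      have hsn : s < n := by
        by_contra hcon
        push_neg at hcon
        have h1 : D s = D (s - n) + j := by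
          have := hDper (s - n); rw [show s - n + n = s by omega] at this; exact this
        have h2 : E ≤ D (s - n) := hEle _
        omega
      have hile : c < D s + j := by
        by_contra hcon
        push_neg at hcon
        have := hmax (s + n) (by omega)
        rw [hDper] at this
        omega
      refine ⟨(s, (c - D s).toNat), ?_, ?_⟩
      · rw [hmemGP]
        refine ⟨hsn, by omega, ?_⟩
        intro q h1 h2
        have h3 := hmax (s + q) (by omega)
        have h4 : (((c - D s).toNat : ℕ) : ℤ) = c - D s := Int.toNat_of_nonneg (by omega)
        simp only [h4]
        omega
      · simp only
        have h4 : (((c - D s).toNat : ℕ) : ℤ) = c - D s := Int.toNat_of_nonneg (by omega)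
        rw [h4]; ring
  rw [hcard, Int.card_Ico]
  simp

/- ### Auxiliary definitions -/

/-- number of `true`s of a boolean path -/
def onesB {N : ℕ} (g : Fin N → Bool) : ℕ := (Finset.univ.filter (fun t => g t = true)).card

/-- number of `true`s among the first `k*q` entries -/
def cntB {N : ℕ} [NeZero N] (k : ℕ) (g : Fin N → Bool) (q : ℕ) : ℕ :=
  ∑ m ∈ Finset.range (k * q), (if g ((m : ℕ) : Fin N) then 1 else 0)

/-- number of `true`s in the `q`-th block of length `k` -/
def blkB {N : ℕ} [NeZero N] (k : ℕ) (g : Fin N → Bool) (q : ℕ) : ℕ :=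
  ∑ r ∈ Finset.range k, (if g ((k * q + r : ℕ) : Fin N) then 1 else 0)

/-- cyclic rotation of a boolean path by `c` -/
def rotB {N : ℕ} [NeZero N] (c : ℕ) (g : Fin N → Bool) : Fin N → Bool :=
  fun t => g (t + ((c : ℕ) : Fin N))

/- ### Generic sum lemmas -/

lemma sum_range_add' {M : Type*} [AddCommMonoid M] (f : ℕ → M) (a b : ℕ) :
    ∑ i ∈ Finset.range (a + b), f i
      = ∑ i ∈ Finset.range a, f i + ∑ i ∈ Finset.range b, f (a + i) := by
  induction b with
  | zero => simp
  | succ b ih =>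
    rw [show a + (b+1) = (a+b) + 1 by omega, Finset.sum_range_succ, ih,
      Finset.sum_range_succ, add_assoc]

lemma sum_range_shift1 (F : ℕ → ℕ) (n : ℕ) (hp : ∀ q, F (q + n) = F q) :
    ∑ q ∈ Finset.range n, F (q + 1) = ∑ q ∈ Finset.range n, F q := by
  have h1 := Finset.sum_range_succ' F n
  have h2 := Finset.sum_range_succ F n
  have h3 : F n = F 0 := by simpa using hp 0
  omega

lemma sum_range_shift (F : ℕ → ℕ) (n : ℕ) (hp : ∀ q, F (q + n) = F q) (s : ℕ) :
    ∑ q ∈ Finset.range n, F (q + s) = ∑ q ∈ Finset.range n, F q := by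
  induction s with
  | zero => simp
  | succ s ih =>
    have : ∑ q ∈ Finset.range n, F (q + (s+1))
        = ∑ q ∈ Finset.range n, (fun m => F (m + s)) (q + 1) := by
      apply Finset.sum_congr rfl
      intro q _
      simp only []
      congr 1
      omega
    rw [this, sum_range_shift1 (fun m => F (m + s)) n (fun q => by
      rw [show q + n + s = (q+s) + n by omega, hp])]
    exact ih

/- ### Counting lemmas on `Fin N` -/

lemma card_filter_lt_and {N : ℕ} [NeZero N] (P : Fin N → Prop) [DecidablePred P]
    (m : ℕ) (hm : m ≤ N) :
    (Finset.univ.filter (fun t : Fin N => (t : ℕ) < m ∧ P t)).card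
      = ∑ i ∈ Finset.range m, (if P ((i : ℕ) : Fin N) then 1 else 0) := by
  classical
  rw [Finset.card_filter]
  have h1 : ∀ t : Fin N, (if ((t:ℕ) < m ∧ P t) then (1:ℕ) else 0)
      = (fun i : ℕ => if (i < m ∧ P ((i:ℕ) : Fin N)) then (1:ℕ) else 0) ((t:ℕ)) := by
    intro t
    simp only [Fin.cast_val_eq_self]
  calc ∑ t : Fin N, (if ((t:ℕ) < m ∧ P t) then (1:ℕ) else 0)
      = ∑ i ∈ Finset.range N, (if (i < m ∧ P ((i:ℕ) : Fin N)) then (1:ℕ) else 0) := by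
        rw [← Fin.sum_univ_eq_sum_range (fun i : ℕ => if (i < m ∧ P ((i:ℕ) : Fin N)) then (1:ℕ) else 0) N]
        exact Finset.sum_congr rfl fun t _ => h1 t
    _ = ∑ i ∈ Finset.range m, (if (i < m ∧ P ((i:ℕ) : Fin N)) then (1:ℕ) else 0) := by
        refine (Finset.sum_subset (Finset.range_subset_range.2 hm) ?_).symm
        intro i _ hi
        rw [Finset.mem_range] at hi
        rw [if_neg]
        tauto
    _ = ∑ i ∈ Finset.range m, (if P ((i:ℕ) : Fin N) then (1:ℕ) else 0) := by
        apply Finset.sum_congr rfl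
        intro i hi
        rw [Finset.mem_range] at hi
        by_cases h : P ((i:ℕ) : Fin N)
        · rw [if_pos ⟨hi, h⟩, if_pos h]
        · rw [if_neg (by tauto), if_neg h]

lemma card_filter_lt {N : ℕ} [NeZero N] (m : ℕ) (hm : m ≤ N) :
    (Finset.univ.filter (fun t : Fin N => (t : ℕ) < m)).card = m := by
  classical
  have h := card_filter_lt_and (N := N) (fun _ => True) m hm
  simpa using h

lemma cntB_eq_card {N : ℕ} [NeZero N] (k : ℕ) (g : Fin N → Bool) (q : ℕ) (h : k * q ≤ N) :
    (Finset.univ.filter (fun t : Fin N => (t : ℕ) < k * q ∧ g t = true)).card = cntB k g q := by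
  classical
  rw [card_filter_lt_and (fun t => g t = true) (k*q) h, cntB]

lemma cntB_eq_sum_blk {N : ℕ} [NeZero N] (k : ℕ) (g : Fin N → Bool) (q : ℕ) :
    cntB k g q = ∑ q' ∈ Finset.range q, blkB k g q' := by
  induction q with
  | zero => simp [cntB]
  | succ q ih =>
    rw [Finset.sum_range_succ, ← ih, cntB, cntB, show k * (q+1) = k*q + k by ring,
      sum_range_add' _ (k*q) k, blkB]

lemma onesB_eq_sum_blk {n k : ℕ} [NeZero (k*n)] (g : Fin (k*n) → Bool) :
    onesB g = ∑ q ∈ Finset.range n, blkB k g q := by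
  classical
  rw [← cntB_eq_sum_blk, ← cntB_eq_card k g n le_rfl, onesB]
  congr 1
  apply Finset.filter_congr
  intro t _
  simp [t.isLt]

lemma blkB_rot {n k : ℕ} [NeZero (k*n)] (g : Fin (k*n) → Bool) (s q : ℕ)
    (hq : q < n) :
    blkB k (rotB (k*s) g) q = blkB k g ((q + s) % n) := by
  rw [blkB, blkB]
  apply Finset.sum_congr rfl
  intro r _
  congr 1
  rw [rotB]
  congr 1
  have hdm := Nat.div_add_mod (q+s) n
  have h2 : k*(q+s) = (k*n)*((q+s)/n) + k*((q+s)%n) := by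
    conv_lhs => rw [← hdm]
    ring
  have h3 : k*(q+s) = k*q + k*s := by ring
  have harith : k*q + r + k*s = (k*((q+s)%n) + r) + (k*n)*((q+s)/n) := by omega
  rw [← Nat.cast_add, harith, Nat.cast_add, show ((k*n*((q+s)/n) : ℕ) : Fin (k*n)) = 0 from
    Fin.ext (by simp [Fin.val_natCast, Nat.mul_mod_right]), add_zero]

lemma onesB_rot {n k : ℕ} [NeZero (k*n)] (g : Fin (k*n) → Bool) (s : ℕ) :
    onesB (rotB (k*s) g) = onesB g := by
  rw [onesB_eq_sum_blk (n := n), onesB_eq_sum_blk (n := n)]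
  have h1 : ∑ q ∈ Finset.range n, blkB k (rotB (k*s) g) q
      = ∑ q ∈ Finset.range n, (fun m => blkB k g (m % n)) (q + s) := by
    apply Finset.sum_congr rfl
    intro q hq
    rw [Finset.mem_range] at hq
    exact blkB_rot g s q hq
  have hn : 0 < n := by
    rcases Nat.eq_zero_or_pos n with h | h
    · subst h; simp at *; exact absurd (NeZero.ne (k*0)) (by simp)
    · exact h
  have h2 := sum_range_shift (fun m => blkB k g (m % n)) n
    (fun q => by simp [Nat.add_mod_right]) s
  beta_reduce at h2
  beta_reduce at h1
  rw [h1, h2]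
  apply Finset.sum_congr rfl
  intro q hq
  rw [Finset.mem_range] at hq
  rw [Nat.mod_eq_of_lt hq]

/- ### path sum and the baseline inequality -/

lemma pathSum_eq_card {N : ℕ} [NeZero N] (f : Fin N → ℤ) (hf : ∀ t, f t = 1 ∨ f t = -1)
    (m : ℕ) (hm : m ≤ N) :
    pathSum f m
      = 2 * ((Finset.univ.filter (fun t : Fin N => (t : ℕ) < m ∧ f t = 1)).card : ℤ) - m := by
  classical
  set s : Finset (Fin N) := Finset.univ.filter (fun t : Fin N => (t : ℕ) < m) with hs
  set A : Finset (Fin N) := Finset.univ.filter (fun t : Fin N => (t : ℕ) < m ∧ f t = 1) with hA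
  have hff : s.filter (fun t => f t = 1) = A := by rw [hs, Finset.filter_filter, hA]
  have hcard : s.card = m := card_filter_lt m hm
  have hsplit := Finset.sum_filter_add_sum_filter_not s (fun t => f t = 1) f
  have h1 : ∑ t ∈ s.filter (fun t => f t = 1), f t = (A.card : ℤ) := by
    rw [Finset.sum_congr rfl (fun t ht => (Finset.mem_filter.1 ht).2), hff]
    simp
  have h2 : ∑ t ∈ s.filter (fun t => ¬ f t = 1), f t
      = -(((s.filter (fun t => ¬ f t = 1)).card : ℤ)) := by
    have hval : ∀ t ∈ s.filter (fun t => ¬ f t = 1), f t = -1 := by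
      intro t ht
      rcases hf t with h | h
      · exact absurd h (Finset.mem_filter.1 ht).2
      · exact h
    rw [Finset.sum_congr rfl hval]
    simp
  have hcards := Finset.card_filter_add_card_filter_not (s := s)
    (p := fun t => f t = 1)
  rw [hcard, hff] at hcards
  have hps : pathSum f m = ∑ t ∈ s, f t := rfl
  rw [hps, ← hsplit, h1, h2]
  have h3 : ((s.filter (fun t => ¬ f t = 1)).card : ℤ) = (m : ℤ) - (A.card : ℤ) := by
    omega
  rw [h3]
  ring

lemma bridge (n k q i a : ℕ) (hn : 1 ≤ n) (hk : 2 ≤ k) (hq1 : 0 < q) (hq2 : q < n)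
    (hi : 1 ≤ i) :
    (((k * n : ℕ) : ℤ) * ((2 * (a:ℤ) - (k*q : ℕ)) - 2 * ((i:ℤ) - 1))
        > ((k * q : ℕ) : ℤ) * (2 - ((k:ℤ) - 2) * (n:ℤ)))
      ↔ q + i ≤ a := by
  have hx : ((k * n : ℕ) : ℤ) * ((2 * (a:ℤ) - (k*q : ℕ)) - 2 * ((i:ℤ) - 1))
      - ((k * q : ℕ) : ℤ) * (2 - ((k:ℤ) - 2) * (n:ℤ))
      = 2 * (k:ℤ) * ((n:ℤ) * ((a:ℤ) - (i:ℤ) + 1 - (q:ℤ)) - (q:ℤ)) := by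
    push_cast
    ring
  have hkpos : (0:ℤ) < (k:ℤ) := by exact_mod_cast (by omega : 0 < k)
  have hnpos : (0:ℤ) < (n:ℤ) := by exact_mod_cast (by omega : 0 < n)
  have hqpos : (0:ℤ) < (q:ℤ) := by exact_mod_cast hq1
  have hqn : (q:ℤ) < (n:ℤ) := by exact_mod_cast hq2
  constructor
  · intro h
    have h0 : (0:ℤ) < 2 * (k:ℤ) * ((n:ℤ) * ((a:ℤ) - (i:ℤ) + 1 - (q:ℤ)) - (q:ℤ)) := by
      linarith [hx]
    have h1 : (0:ℤ) < (n:ℤ) * ((a:ℤ) - (i:ℤ) + 1 - (q:ℤ)) - (q:ℤ) := by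
      nlinarith
    have h2 : (0:ℤ) < (a:ℤ) - (i:ℤ) + 1 - (q:ℤ) := by
      by_contra hc
      push_neg at hc
      nlinarith
    omega
  · intro h
    have h2 : (1:ℤ) ≤ (a:ℤ) - (i:ℤ) + 1 - (q:ℤ) := by
      have : (q:ℤ) + (i:ℤ) ≤ (a:ℤ) := by exact_mod_cast h
      omega
    have h1 : (0:ℤ) < (n:ℤ) * ((a:ℤ) - (i:ℤ) + 1 - (q:ℤ)) - (q:ℤ) := by
      nlinarith
    have h3 : (0:ℤ) < 2 * (k:ℤ) * ((n:ℤ) * ((a:ℤ) - (i:ℤ) + 1 - (q:ℤ)) - (q:ℤ)) := by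
      nlinarith
    linarith [hx]

/-- Main Theorem: `n` times the number of pairs `(f, i)` with
`f ∈ 𝒫_{n,k,j}`, `1 ≤ i ≤ j`, and every interior k-divisible point of `f` strictly
above the baseline for `(f, i)` (i.e. `kn·(S(f,m) − 2(i−1)) > m·(2−(k−2)n)` for every
`m` with `0 < m < kn` and `k ∣ m`), equals `j·C(kn, n+j)`. -/
theorem stmt_10 (n k j : ℕ) (hn : 1 ≤ n) (hk : 2 ≤ k) (hj : 1 ≤ j)
    (hnj : n + j ≤ k * n) :
    n * Nat.card {p : (Fin (k * n) → ℤ) × ℕ //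
        IsPathPJ n k j p.1 ∧ 1 ≤ p.2 ∧ p.2 ≤ j ∧
        ∀ m : ℕ, 0 < m → m < k * n → k ∣ m →
          ((k * n : ℕ) : ℤ) * (pathSum p.1 m - 2 * ((p.2 : ℤ) - 1)) >
            (m : ℤ) * (2 - ((k : ℤ) - 2) * (n : ℤ))} =
      j * Nat.choose (k * n) (n + j) := by
  classical
  haveI : NeZero (k * n) := ⟨Nat.mul_ne_zero (by omega) (by omega)⟩
  set P : ((Fin (k * n) → ℤ) × ℕ) → Prop := fun p =>
      IsPathPJ n k j p.1 ∧ 1 ≤ p.2 ∧ p.2 ≤ j ∧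
        ∀ m : ℕ, 0 < m → m < k * n → k ∣ m →
          ((k * n : ℕ) : ℤ) * (pathSum p.1 m - 2 * ((p.2 : ℤ) - 1)) >
            (m : ℤ) * (2 - ((k : ℤ) - 2) * (n : ℤ)) with hP
  set toB : (Fin (k*n) → ℤ) → (Fin (k*n) → Bool) := fun f t => decide (f t = 1) with htoB
  set toZ : (Fin (k*n) → Bool) → (Fin (k*n) → ℤ) := fun g t => if g t then 1 else -1 with htoZ
  set Pred : (Fin (k*n) → Bool) → ℕ → Prop :=
    fun g i => ∀ q, 0 < q → q < n → q + i + 1 ≤ cntB k g q with hPred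
  set PairSet : Finset ((Fin (k*n) → Bool) × Fin j) :=
    Finset.univ.filter (fun p => onesB p.1 = n + j ∧ Pred p.1 p.2.val) with hPairSet
  set O : Finset (Fin (k*n) → Bool) := Finset.univ.filter (fun g => onesB g = n + j) with hO
  set cardI : (Fin (k*n) → Bool) → ℕ :=
    fun g => ((Finset.range j).filter (fun i => Pred g i)).card with hcardI
  -- basic facts about the encodings
  have htoZ_pm : ∀ g t, toZ g t = 1 ∨ toZ g t = -1 := by
    intro g t; by_cases h : g t <;> simp [htoZ, h]
  have htoB_toZ : ∀ g, toB (toZ g) = g := by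
    intro g; funext t; by_cases h : g t <;> simp [htoB, htoZ, h]
  have htoZ_toB : ∀ f, (∀ t, f t = 1 ∨ f t = -1) → toZ (toB f) = f := by
    intro f hf; funext t; rcases hf t with h | h <;> simp [htoB, htoZ, h]
  have honesB : ∀ f : Fin (k*n) → ℤ,
      (Finset.univ.filter (fun t => f t = 1)).card = onesB (toB f) := by
    intro f
    rw [onesB]
    congr 1
    apply Finset.filter_congr
    intro t _
    simp [htoB]
  have hcnt : ∀ (f : Fin (k*n) → ℤ) (q : ℕ), q ≤ n →
      (Finset.univ.filter (fun t : Fin (k*n) => (t:ℕ) < k*q ∧ f t = 1)).card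
        = cntB k (toB f) q := by
    intro f q hq
    rw [← cntB_eq_card k (toB f) q (Nat.mul_le_mul_left k hq)]
    congr 1
    apply Finset.filter_congr
    intro t _
    simp [htoB]
  -- the inequality condition in boolean terms
  have hIff : ∀ (f : Fin (k*n) → ℤ), (∀ t, f t = 1 ∨ f t = -1) → ∀ i : ℕ, 1 ≤ i →
      ((∀ m : ℕ, 0 < m → m < k*n → k ∣ m →
        ((k*n:ℕ):ℤ) * (pathSum f m - 2*((i:ℤ)-1)) > (m:ℤ) * (2 - ((k:ℤ)-2)*(n:ℤ)))
      ↔ ∀ q, 0 < q → q < n → q + i ≤ cntB k (toB f) q) := by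
    intro f hf i hi
    constructor
    · intro H q hq1 hq2
      have hmlt : k*q < k*n := by
        have h1 : k*(q+1) ≤ k*n := Nat.mul_le_mul_left k (by omega)
        have h2 : k*(q+1) = k*q + k := by ring
        omega
      have hH := H (k*q) (Nat.mul_pos (by omega) hq1) hmlt (dvd_mul_right k q)
      rw [pathSum_eq_card f hf (k*q) (le_of_lt hmlt)] at hH
      have hb := (bridge n k q i _ hn hk hq1 hq2 hi).1 hH
      rwa [hcnt f q (le_of_lt hq2)] at hb
    · intro H m hm1 hm2 hdvd
      obtain ⟨q, rfl⟩ := hdvd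
      have hq1 : 0 < q := by
        rcases Nat.eq_zero_or_pos q with h | h
        · subst h; simp at hm1
        · exact h
      have hq2 : q < n := by
        by_contra hc
        push_neg at hc
        have := Nat.mul_le_mul_left k hc
        omega
      have hH := H q hq1 hq2
      rw [← hcnt f q (le_of_lt hq2)] at hH
      rw [pathSum_eq_card f hf (k*q) (le_of_lt hm2)]
      exact (bridge n k q i _ hn hk hq1 hq2 hi).2 hH
  -- Step 1 : Nat.card of the subtype equals PairSet.card
  have hGmem : ∀ y : (Fin (k*n) → Bool) × Fin j, y ∈ PairSet → P (toZ y.1, (y.2 : ℕ) + 1) := by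
    intro y hy
    rw [hPairSet, Finset.mem_filter] at hy
    obtain ⟨-, hones, hpred⟩ := hy
    have hpath : IsPathPJ n k j (toZ y.1) := by
      constructor
      · exact htoZ_pm y.1
      · rw [honesB (toZ y.1), htoB_toZ]; exact hones
    refine ⟨hpath, by omega, by have := y.2.isLt; omega, ?_⟩
    have := (hIff (toZ y.1) (htoZ_pm y.1) ((y.2:ℕ)+1) (by omega)).2
    rw [htoB_toZ] at this
    have h2 : (∀ q, 0 < q → q < n → q + ((y.2:ℕ)+1) ≤ cntB k y.1 q) := by
      intro q h1q h2q
      have := hpred q h1q h2q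
      omega
    exact this h2
  have hcardEq : Nat.card {p : (Fin (k * n) → ℤ) × ℕ // P p} = PairSet.card := by
    rw [← Fintype.card_coe PairSet, ← Nat.card_eq_fintype_card]
    apply Nat.card_congr
    apply Equiv.symm
    apply Equiv.ofBijective (f := fun y : {p // p ∈ PairSet} =>
      (⟨(toZ y.1.1, (y.1.2 : ℕ) + 1), hGmem y.1 y.2⟩ : {p : (Fin (k * n) → ℤ) × ℕ // P p}))
    constructor
    · intro y y' heq
      rw [Subtype.ext_iff, Prod.ext_iff] at heq
      obtain ⟨h1, h2⟩ := heq
      simp only at h1 h2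
      apply Subtype.ext
      apply Prod.ext
      · have := congrArg toB h1
        rwa [htoB_toZ, htoB_toZ] at this
      · have : ((y.1.2 : ℕ)) = ((y'.1.2 : ℕ)) := by omega
        exact Fin.ext this
    · intro x
      obtain ⟨⟨f, i⟩, hx⟩ := x
      rw [hP] at hx
      obtain ⟨⟨hfpm, hfcard⟩, hi1, hi2, hineq⟩ := hx
      have hilt : i - 1 < j := by omega
      refine ⟨⟨(toB f, ⟨i - 1, hilt⟩), ?_⟩, ?_⟩
      · rw [hPairSet, Finset.mem_filter]
        refine ⟨Finset.mem_univ _, ?_, ?_⟩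
        · rw [← honesB]; exact hfcard
        · intro q hq1 hq2
          have := ((hIff f hfpm i hi1).1 hineq) q hq1 hq2
          simp only
          omega
      · apply Subtype.ext
        apply Prod.ext
        · simp only
          exact htoZ_toB f hfpm
        · simp only
          omega
  rw [hcardEq]
  -- Step 2 : PairSet.card as a sum over O
  have step2 : PairSet.card = ∑ g ∈ O, cardI g := by
    rw [hPairSet, Finset.card_filter, ← Finset.univ_product_univ, Finset.sum_product]
    have hinner : ∀ g : Fin (k*n) → Bool,
        (∑ i : Fin j, if (onesB g = n + j ∧ Pred g i.val) then (1:ℕ) else 0)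
          = if onesB g = n + j then cardI g else 0 := by
      intro g
      by_cases hg : onesB g = n + j
      · rw [if_pos hg]
        have h1 : ∀ i : Fin j, (if (onesB g = n + j ∧ Pred g i.val) then (1:ℕ) else 0)
            = if Pred g i.val then 1 else 0 := by
          intro i
          by_cases hp : Pred g i.val
          · rw [if_pos ⟨hg, hp⟩, if_pos hp]
          · rw [if_neg (by tauto), if_neg hp]
        rw [Finset.sum_congr rfl (fun i _ => h1 i),
          Fin.sum_univ_eq_sum_range (fun i => if Pred g i then (1:ℕ) else 0) j,
          hcardI]
        simp only
        rw [Finset.card_filter]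
      · rw [if_neg hg]
        apply Finset.sum_eq_zero
        intro i _
        rw [if_neg (by tauto)]
    rw [Finset.sum_congr rfl (fun g _ => hinner g), ← Finset.sum_filter, hO]
  rw [step2]
  -- rotations
  have hrotO : ∀ (s : ℕ) (g : Fin (k*n) → Bool), g ∈ O → rotB (k*s) g ∈ O := by
    intro s g hg
    rw [hO, Finset.mem_filter] at hg ⊢
    exact ⟨Finset.mem_univ _, by rw [onesB_rot (n := n)]; exact hg.2⟩
  set unrot : ℕ → (Fin (k*n) → Bool) → (Fin (k*n) → Bool) :=
    fun c g t => g (t - ((c : ℕ) : Fin (k*n))) with hunrot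
  have hrot_unrot : ∀ c g, rotB c (unrot c g) = g := by
    intro c g; funext t
    rw [rotB, hunrot]
    simp only
    rw [add_sub_cancel_right]
  have hunrot_rot : ∀ c g, unrot c (rotB c g) = g := by
    intro c g; funext t
    rw [hunrot]
    simp only
    rw [rotB, sub_add_cancel]
  have hunrotO : ∀ (s : ℕ) (g : Fin (k*n) → Bool), g ∈ O → unrot (k*s) g ∈ O := by
    intro s g hg
    rw [hO, Finset.mem_filter] at hg ⊢
    refine ⟨Finset.mem_univ _, ?_⟩
    have h1 : onesB (rotB (k*s) (unrot (k*s) g)) = onesB (unrot (k*s) g) :=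
      onesB_rot (n := n) _ s
    rw [hrot_unrot] at h1
    rw [← h1]
    exact hg.2
  have step3 : ∀ s : ℕ, ∑ g ∈ O, cardI (rotB (k*s) g) = ∑ g ∈ O, cardI g := by
    intro s
    apply Finset.sum_bij' (i := fun g _ => rotB (k*s) g) (j := fun g _ => unrot (k*s) g)
    · intro g hg; exact hrotO s g hg
    · intro g hg; exact hunrotO s g hg
    · intro g _; exact hunrot_rot (k*s) g
    · intro g _; exact hrot_unrot (k*s) g
    · intro g _; rfl
  -- Step 4 : cycle lemma application
  have step4 : ∀ g ∈ O, ∑ s ∈ Finset.range n, cardI (rotB (k*s) g) = j := by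
    intro g hg
    have hones : onesB g = n + j := (Finset.mem_filter.1 hg).2
    set d : ℕ → ℤ := fun q => (blkB k g (q % n) : ℤ) - 1 with hd
    have hper : ∀ m, d (m + n) = d m := by
      intro m; rw [hd]; simp [Nat.add_mod_right]
    have hlb : ∀ m, (-1:ℤ) ≤ d m := by
      intro m
      have : (0:ℤ) ≤ (blkB k g (m % n) : ℤ) := by positivity
      rw [hd]
      simp only
      omega
    have hsum : ∑ t ∈ Finset.range n, d t = j := by
      have h1 : ∀ t ∈ Finset.range n, d t = (blkB k g t : ℤ) - 1 := by
        intro t ht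
        rw [hd]
        simp only
        rw [Nat.mod_eq_of_lt (Finset.mem_range.1 ht)]
      rw [Finset.sum_congr rfl h1, Finset.sum_sub_distrib, Finset.sum_const,
        Finset.card_range]
      have h2 : ∑ t ∈ Finset.range n, (blkB k g t : ℤ) = ((n : ℤ) + j) := by
        have h3 := onesB_eq_sum_blk (n := n) (k := k) g
        rw [hones] at h3
        have h4 : (((n + j : ℕ)) : ℤ) = ((∑ q ∈ Finset.range n, blkB k g q : ℕ) : ℤ) := by
          exact_mod_cast h3
        push_cast at h4
        omega
      rw [h2]
      push_cast
      ring
    have hCL := cycle_lemma n j hn hj d hper hlb hsum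
    rw [← hCL]
    apply Finset.sum_congr rfl
    intro s hs
    rw [Finset.mem_range] at hs
    rw [hcardI]
    simp only
    apply congrArg Finset.card
    apply Finset.ext
    intro i
    rw [Finset.mem_filter, Finset.mem_filter]
    apply and_congr_right
    intro hi
    rw [hPred]
    simp only
    have hq : ∀ q : ℕ, 0 < q → q < n →
        ((cntB k (rotB (k*s) g) q : ℤ) = (∑ t ∈ Finset.range q, d (s + t)) + q) := by
      intro q hq1 hq2
      have h1 : cntB k (rotB (k*s) g) q = ∑ t ∈ Finset.range q, blkB k g ((t+s) % n) := by
        rw [cntB_eq_sum_blk]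
        apply Finset.sum_congr rfl
        intro t ht
        rw [Finset.mem_range] at ht
        exact blkB_rot g s t (by omega)
      have h2 : ∑ t ∈ Finset.range q, d (s + t)
          = (∑ t ∈ Finset.range q, (blkB k g ((t+s) % n) : ℤ)) - q := by
        have h3 : ∀ t ∈ Finset.range q, d (s + t) = (blkB k g ((t+s) % n) : ℤ) - 1 := by
          intro t _
          rw [hd]
          simp only
          rw [show s + t = t + s by omega]
        rw [Finset.sum_congr rfl h3, Finset.sum_sub_distrib, Finset.sum_const,
          Finset.card_range]
        push_cast
        ring
      rw [h1, h2]
      push_cast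
      ring
    constructor
    · intro h q hq1 hq2
      have := h q hq1 hq2
      have heq := hq q hq1 hq2
      omega
    · intro h q hq1 hq2
      have := h q hq1 hq2
      have heq := hq q hq1 hq2
      omega
  -- Step 6 : O.card = choose
  have step6 : O.card = Nat.choose (k*n) (n+j) := by
    have h1 : ((Finset.univ : Finset (Fin (k*n))).powersetCard (n+j)).card
        = Nat.choose (k*n) (n+j) := by
      rw [Finset.card_powersetCard, Finset.card_univ, Fintype.card_fin]
    rw [← h1]
    apply Finset.card_bij (fun g _ => Finset.univ.filter (fun t => g t = true))
    · intro g hg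
      rw [Finset.mem_powersetCard]
      exact ⟨Finset.filter_subset _ _, (Finset.mem_filter.1 hg).2⟩
    · intro g hg g' hg' heq
      funext t
      have h := Finset.ext_iff.1 heq t
      simp only [Finset.mem_filter, Finset.mem_univ, true_and] at h
      cases hgt : g t <;> cases hgt' : g' t
      · rfl
      · rw [hgt, hgt'] at h; simp at h
      · rw [hgt, hgt'] at h; simp at h
      · rfl
    · intro A hA
      rw [Finset.mem_powersetCard] at hA
      refine ⟨fun t => decide (t ∈ A), ?_, ?_⟩
      · rw [hO, Finset.mem_filter]
        refine ⟨Finset.mem_univ _, ?_⟩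
        rw [onesB]
        rw [show Finset.univ.filter (fun t => decide (t ∈ A) = true) = A by
          ext t; simp]
        exact hA.2
      · ext t; simp
  -- put everything together
  calc n * ∑ g ∈ O, cardI g
      = ∑ _s ∈ Finset.range n, ∑ g ∈ O, cardI g := by
        rw [Finset.sum_const, Finset.card_range, smul_eq_mul]
    _ = ∑ s ∈ Finset.range n, ∑ g ∈ O, cardI (rotB (k*s) g) := by
        apply Finset.sum_congr rfl
        intro s _
        exact (step3 s).symm
    _ = ∑ g ∈ O, ∑ s ∈ Finset.range n, cardI (rotB (k*s) g) := Finset.sum_comm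
    _ = ∑ g ∈ O, j := Finset.sum_congr rfl step4
    _ = O.card * j := by rw [Finset.sum_const, smul_eq_mul]
    _ = j * Nat.choose (k*n) (n+j) := by rw [step6, Nat.mul_comm]
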